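/- Let h : ℝ → ℝ be defined by h(t) = η((1 + t)/2). Let m ≥ 2 and −1 = t₁ < t₂ < ⋯ < t_m = 1, and let p be a real polynomial with deg p ≤ 2m − 3 such that p(t_i) = h(t_i) for all 1 ≤ i ≤ m and p′(t_i) = h′(t_i) for all 1 < i < m. Then p(t) ≤ h(t) for every t ∈ [−1, 1], and p(t) = h(t) for t ∈ [−1, 1] if and only if t ∈ {t₁, …, t_m}. -/

import Mathlib

open Polynomial Set

lemma rolle_finset {a b : ℝ} (f : ℝ → ℝ) (hc : ContinuousOn f (Set.Icc a b))
    (Z : Finset ℝ) (hZ : ↑Z ⊆ Set.Icc a b) (hf0 : ∀ x ∈ Z, f x = 0) :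
    ∃ Z' : Finset ℝ, Z'.card = Z.card - 1 ∧ (∀ x ∈ Z', deriv f x = 0) ∧
      (∀ x ∈ Z', x ∉ Z) ∧ (∀ x ∈ Z', ∃ u ∈ Z, ∃ v ∈ Z, u < x ∧ x < v) := by
  induction' hn : Z.card with n ih generalizing Z
  · exact ⟨∅, by simp, by simp, by simp, by simp⟩
  · rcases Nat.eq_zero_or_pos n with rfl | hnpos
    · exact ⟨∅, by simp, by simp, by simp, by simp⟩
    have hZne : Z.Nonempty := Finset.card_pos.mp (by omega)
    have ha0Z : Z.min' hZne ∈ Z := Z.min'_mem hZne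
    set a0 := Z.min' hZne with ha0
    set Z₂ := Z.erase a0 with hZ₂def
    have hZ₂card : Z₂.card = n := by rw [hZ₂def, Finset.card_erase_of_mem ha0Z, hn]; omega
    have hZ₂ne : Z₂.Nonempty := Finset.card_pos.mp (by omega)
    set b0 := Z₂.min' hZ₂ne with hb0
    have hb0Z₂ : b0 ∈ Z₂ := Z₂.min'_mem hZ₂ne
    have hb0Z : b0 ∈ Z := Finset.mem_of_mem_erase hb0Z₂
    have hab : a0 < b0 :=
      lt_of_le_of_ne (Z.min'_le _ hb0Z) (Ne.symm (Finset.ne_of_mem_erase hb0Z₂))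
    have hgap : ∀ z ∈ Z, z ≤ a0 ∨ b0 ≤ z := by
      intro z hz
      rcases eq_or_ne z a0 with rfl | hne
      · exact Or.inl le_rfl
      · exact Or.inr (Z₂.min'_le _ (Finset.mem_erase.mpr ⟨hne, hz⟩))
    have hsub : Set.Icc a0 b0 ⊆ Set.Icc a b := Set.Icc_subset_Icc (hZ ha0Z).1 (hZ hb0Z).2
    obtain ⟨c, hc1, hc2⟩ := exists_deriv_eq_zero hab (hc.mono hsub)
      (by rw [hf0 _ ha0Z, hf0 _ hb0Z])
    have hZ₂sub : (↑Z₂ : Set ℝ) ⊆ Set.Icc a b := fun x hx => hZ (Finset.mem_of_mem_erase hx)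
    obtain ⟨Z'', hcard, hd0, hnot, hbetween⟩ :=
      ih Z₂ hZ₂sub (fun x hx => hf0 _ (Finset.mem_of_mem_erase hx)) hZ₂card
    have hcZ'' : c ∉ Z'' := by
      intro hcm
      obtain ⟨u, hu, v, hv, huv, _⟩ := hbetween c hcm
      have : b0 ≤ u := Z₂.min'_le _ hu
      linarith [hc1.2]
    refine ⟨insert c Z'', ?_, ?_, ?_, ?_⟩
    · rw [Finset.card_insert_of_notMem hcZ'', hcard]; omega
    · intro x hx
      rcases Finset.mem_insert.mp hx with rfl | hx
      · exact hc2
      · exact hd0 x hx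
    · intro x hx hxZ
      rcases Finset.mem_insert.mp hx with rfl | hx
      · rcases hgap x hxZ with h | h
        · linarith [hc1.1]
        · linarith [hc1.2]
      · rcases eq_or_ne x a0 with rfl | hne
        · obtain ⟨u, hu, v, hv, huv, _⟩ := hbetween _ hx
          have : b0 ≤ u := Z₂.min'_le _ hu
          linarith
        · exact hnot x hx (Finset.mem_erase.mpr ⟨hne, hxZ⟩)
    · intro x hx
      rcases Finset.mem_insert.mp hx with rfl | hx
      · exact ⟨a0, ha0Z, b0, hb0Z, hc1.1, hc1.2⟩
      · obtain ⟨u, hu, v, hv, h1, h2⟩ := hbetween x hx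
        exact ⟨u, Finset.mem_of_mem_erase hu, v, Finset.mem_of_mem_erase hv, h1, h2⟩

lemma hasDerivAt_aff (x : ℝ) : HasDerivAt (fun s : ℝ => (1 + s) / 2) (1 / 2) x := by
  simpa using ((hasDerivAt_id x).const_add 1).div_const 2

lemma hasDerivAt_h {x : ℝ} (hx : (0:ℝ) < 1 + x) :
    HasDerivAt (fun s : ℝ => Real.negMulLog ((1 + s) / 2))
      ((-Real.log ((1 + x) / 2) - 1) / 2) x := by
  have h1 : ((1 + x) / 2 : ℝ) ≠ 0 := by positivity
  have := (Real.hasDerivAt_negMulLog h1).comp x (hasDerivAt_aff x)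
  exact this.congr_deriv (by ring)

lemma hasDerivAt_dh {x : ℝ} (hx : (0:ℝ) < 1 + x) :
    HasDerivAt (fun s : ℝ => (-Real.log ((1 + s) / 2) - 1) / 2)
      (-(1 / (2 * (1 + x)))) x := by
  have h1 : ((1 + x) / 2 : ℝ) ≠ 0 := by positivity
  have hl := (Real.hasDerivAt_log h1).comp x (hasDerivAt_aff x)
  have := ((hl.neg.sub_const 1).div_const 2)
  refine this.congr_deriv ?_
  field_simp

section W
variable {m : ℕ} (t : Fin m → ℝ)

noncomputable def wpoly (m : ℕ) (t : Fin m → ℝ) : ℝ[X] :=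
  ∏ i : Fin m, (X - C (t i)) ^ (if (i : ℕ) = 0 ∨ (i : ℕ) = m - 1 then 1 else 2)

lemma wpoly_monic : (wpoly m t).Monic :=
  monic_prod_of_monic _ _ fun i _ => (monic_X_sub_C _).pow _

lemma filterB_eq (hm : 2 ≤ m) :
    (Finset.univ.filter (fun i : Fin m => (i : ℕ) = 0 ∨ (i : ℕ) = m - 1)) =
      {(⟨0, Nat.lt_of_lt_of_le Nat.zero_lt_two hm⟩ : Fin m), ⟨m - 1, Nat.sub_lt (Nat.lt_of_lt_of_le Nat.zero_lt_two hm) Nat.one_pos⟩} := by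
  ext i
  simp only [Finset.mem_filter, Finset.mem_univ, true_and, Finset.mem_insert,
    Finset.mem_singleton, Fin.ext_iff]

lemma filterB_card (hm : 2 ≤ m) : (Finset.univ.filter
    (fun i : Fin m => (i : ℕ) = 0 ∨ (i : ℕ) = m - 1)).card = 2 := by
  rw [filterB_eq (m := m) hm]
  rw [Finset.card_insert_of_notMem (by simp [Fin.ext_iff]; omega), Finset.card_singleton]

lemma wpoly_natDegree (hm : 2 ≤ m) : (wpoly m t).natDegree = 2 * m - 2 := by
  rw [wpoly, natDegree_prod_of_monic _ _ (fun i _ => (monic_X_sub_C _).pow _)]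
  have : ∀ i : Fin m, ((X - C (t i)) ^ (if (i : ℕ) = 0 ∨ (i : ℕ) = m - 1 then 1 else 2)).natDegree
      = (if (i : ℕ) = 0 ∨ (i : ℕ) = m - 1 then 1 else 2) := by
    intro i
    rw [natDegree_pow, natDegree_X_sub_C, mul_one]
  rw [Finset.sum_congr rfl (fun i _ => this i), Finset.sum_ite, Finset.sum_const,
    Finset.sum_const]
  have h2 := filterB_card (m := m) hm
  have h3 := Finset.card_filter_add_card_filter_not
    (s := (Finset.univ : Finset (Fin m)))
    (p := fun i : Fin m => (i : ℕ) = 0 ∨ (i : ℕ) = m - 1)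
  simp only [Finset.card_univ, Fintype.card_fin] at h3
  simp only [smul_eq_mul, h2]
  omega

lemma wpoly_eval_node (i : Fin m) : (wpoly m t).eval (t i) = 0 := by
  rw [wpoly, eval_prod]
  apply Finset.prod_eq_zero (Finset.mem_univ i)
  rw [eval_pow, eval_sub, eval_X, eval_C, sub_self]
  exact zero_pow (by split <;> omega)

lemma wpoly_deriv_node (i : Fin m) (h1 : 0 < (i : ℕ)) (h2 : (i : ℕ) < m - 1) :
    (derivative (wpoly m t)).eval (t i) = 0 := by
  have hfac : wpoly m t = (X - C (t i)) ^ 2 *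
      ∏ j ∈ Finset.univ.erase i, (X - C (t j)) ^ (if (j : ℕ) = 0 ∨ (j : ℕ) = m - 1 then 1 else 2) := by
    rw [wpoly, ← Finset.mul_prod_erase _ _ (Finset.mem_univ i)]
    congr 1
    rw [if_neg (by omega)]
  rw [hfac]
  simp [derivative_mul, derivative_pow]

lemma wpoly_eval_neg {s : ℝ} (hm : 2 ≤ m) (ht : StrictMono t) (hs1 : -1 < s) (hs2 : s < 1)
    (ht0 : t ⟨0, Nat.lt_of_lt_of_le Nat.zero_lt_two hm⟩ = -1) (htm : t ⟨m - 1, Nat.sub_lt (Nat.lt_of_lt_of_le Nat.zero_lt_two hm) Nat.one_pos⟩ = 1)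
    (hsnot : ∀ i, s ≠ t i) : (wpoly m t).eval s < 0 := by
  classical
  set i0 : Fin m := ⟨0, Nat.lt_of_lt_of_le Nat.zero_lt_two hm⟩ with hi0
  set i1 : Fin m := ⟨m - 1, Nat.sub_lt (Nat.lt_of_lt_of_le Nat.zero_lt_two hm) Nat.one_pos⟩ with hi1
  have hne : i1 ≠ i0 := by simp [hi0, hi1, Fin.ext_iff]; omega
  rw [wpoly, eval_prod]
  have h1 : ∀ j : Fin m, eval s ((X - C (t j)) ^ (if (j : ℕ) = 0 ∨ (j : ℕ) = m - 1 then 1 else 2))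
      = (s - t j) ^ (if (j : ℕ) = 0 ∨ (j : ℕ) = m - 1 then 1 else 2) := by
    intro j; rw [eval_pow, eval_sub, eval_X, eval_C]
  rw [Finset.prod_congr rfl (fun j _ => h1 j)]
  rw [← Finset.mul_prod_erase _ _ (Finset.mem_univ i0),
    ← Finset.mul_prod_erase _ _ (Finset.mem_erase.mpr ⟨hne, Finset.mem_univ i1⟩)]
  have e0 : (if ((i0 : Fin m) : ℕ) = 0 ∨ ((i0 : Fin m) : ℕ) = m - 1 then 1 else 2) = 1 := by
    simp [hi0]
  have e1 : (if ((i1 : Fin m) : ℕ) = 0 ∨ ((i1 : Fin m) : ℕ) = m - 1 then 1 else 2) = 1 := by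
    simp [hi1]
  rw [e0, e1, pow_one, pow_one, ht0, htm]
  have hrest : 0 < ∏ j ∈ (Finset.univ.erase i0).erase i1,
      (s - t j) ^ (if (j : ℕ) = 0 ∨ (j : ℕ) = m - 1 then 1 else 2) := by
    apply Finset.prod_pos
    intro j hj
    have hj1 : j ≠ i1 := (Finset.mem_erase.mp hj).1
    have hj0 : j ≠ i0 := (Finset.mem_erase.mp (Finset.mem_erase.mp hj).2).1
    have hcond : ¬((j : ℕ) = 0 ∨ (j : ℕ) = m - 1) := by
      rw [Ne, Fin.ext_iff] at hj0 hj1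
      simp only [hi0, hi1] at hj0 hj1
      push_neg
      exact ⟨hj0, hj1⟩
    rw [if_neg hcond]
    have : s - t j ≠ 0 := sub_ne_zero.mpr (hsnot j)
    positivity
  have hA : 0 < s - -1 := by linarith
  have hB : s - 1 < 0 := by linarith
  have := mul_neg_of_neg_of_pos hB hrest
  exact mul_neg_of_pos_of_neg hA this

end W

set_option maxHeartbeats 1000000 in
/-- The Hermite interpolant `p` of `h(t) = η((1+t)/2)` at nodes
`−1 = t₁ < … < t_m = 1` (simple nodes at `±1`, double nodes at interior points),
of degree at most `2m−3`, bounds `h` from below on `[−1,1]`, with equality exactly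
at the nodes. -/
theorem stmt_12 (m : ℕ) (hm : 2 ≤ m) (t : Fin m → ℝ) (ht : StrictMono t)
    (ht0 : t ⟨0, by omega⟩ = -1) (htm : t ⟨m - 1, by omega⟩ = 1)
    (p : Polynomial ℝ) (hdeg : p.natDegree ≤ 2 * m - 3)
    (hval : ∀ i : Fin m, p.eval (t i) = Real.negMulLog ((1 + t i) / 2))
    (hder : ∀ i : Fin m, 0 < (i : ℕ) → (i : ℕ) < m - 1 →
      (Polynomial.derivative p).eval (t i) =
        deriv (fun s : ℝ => Real.negMulLog ((1 + s) / 2)) (t i)) :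
    ∀ s ∈ Set.Icc (-1 : ℝ) 1,
      p.eval s ≤ Real.negMulLog ((1 + s) / 2) ∧
      (p.eval s = Real.negMulLog ((1 + s) / 2) ↔ ∃ i, s = t i) := by
  classical
  have hmem : ∀ i : Fin m, t i ∈ Set.Icc (-1 : ℝ) 1 := by
    intro i
    constructor
    · rw [← ht0]; exact ht.monotone (by simp [Fin.le_def])
    · rw [← htm]; exact ht.monotone (by simp [Fin.le_def]; omega)
  have hint : ∀ i : Fin m, 0 < (i : ℕ) → (i : ℕ) < m - 1 → t i ∈ Set.Ioo (-1 : ℝ) 1 := by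
    intro i h1 h2
    constructor
    · rw [← ht0]; exact ht (by simp [Fin.lt_def]; omega)
    · rw [← htm]; exact ht (by simp [Fin.lt_def]; omega)
  have key : ∀ s ∈ Set.Icc (-1 : ℝ) 1, (∀ i, s ≠ t i) →
      p.eval s < Real.negMulLog ((1 + s) / 2) := by
    intro s hs hsnot
    have hs1 : -1 < s := lt_of_le_of_ne hs.1 (by have := hsnot ⟨0, by omega⟩; rw [ht0] at this; exact Ne.symm this)
    have hs2 : s < 1 := lt_of_le_of_ne hs.2 (by have := hsnot ⟨m - 1, by omega⟩; rw [htm] at this; exact this)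
    set w : ℝ[X] := wpoly m t with hw
    have hws : w.eval s < 0 := wpoly_eval_neg t hm ht hs1 hs2 ht0 htm hsnot
    set lam : ℝ := (Real.negMulLog ((1 + s) / 2) - p.eval s) / w.eval s with hlam
    -- suffices: lam < 0
    suffices hlamneg : lam < 0 by
      have : Real.negMulLog ((1 + s) / 2) - p.eval s = lam * w.eval s := by
        rw [hlam, div_mul_cancel₀ _ (ne_of_lt hws)]
      nlinarith [mul_pos_of_neg_of_neg hlamneg hws]
    by_contra hcon
    push_neg at hcon  -- 0 ≤ lam
    set P : ℝ[X] := p + C lam * w with hP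
    set F : ℝ → ℝ := fun x => Real.negMulLog ((1 + x) / 2) - P.eval x with hF
    set Z : Finset ℝ := insert s (Finset.image t Finset.univ) with hZ
    have hsZ : s ∉ Finset.image t Finset.univ := by
      simp only [Finset.mem_image, Finset.mem_univ, true_and, not_exists]
      intro i hi
      exact hsnot i hi.symm
    have hZcard : Z.card = m + 1 := by
      rw [hZ, Finset.card_insert_of_notMem hsZ,
        Finset.card_image_of_injective _ ht.injective, Finset.card_univ, Fintype.card_fin]
    have hZsub : (↑Z : Set ℝ) ⊆ Set.Icc (-1 : ℝ) 1 := by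
      intro x hx
      simp only [hZ, Finset.coe_insert, Set.mem_insert_iff, Finset.coe_image,
        Finset.coe_univ, Set.image_univ, Set.mem_range] at hx
      rcases hx with rfl | ⟨i, rfl⟩
      · exact hs
      · exact hmem i
    have hF0 : ∀ x ∈ Z, F x = 0 := by
      intro x hx
      simp only [hZ, Finset.mem_insert, Finset.mem_image, Finset.mem_univ, true_and] at hx
      rcases hx with hxs | ⟨i, rfl⟩
      · subst hxs
        have : lam * w.eval x = Real.negMulLog ((1 + x) / 2) - p.eval x := by
          rw [hlam, div_mul_cancel₀ _ (ne_of_lt hws)]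
        simp only [hF, hP, eval_add, eval_mul, eval_C]
        rw [this]; ring
      · simp only [hF, hP, eval_add, eval_mul, eval_C, wpoly_eval_node, hval i]
        have := wpoly_eval_node t i
        rw [← hw] at this
        rw [this]; ring
    have hFc : ContinuousOn F (Set.Icc (-1 : ℝ) 1) := by
      apply Continuous.continuousOn
      exact (Real.continuous_negMulLog.comp (by continuity)).sub P.continuous_aeval
    obtain ⟨Z₁, hZ₁card, hZ₁d, hZ₁not, hZ₁btw⟩ := rolle_finset F hFc Z hZsub hF0
    rw [hZcard] at hZ₁card
    simp only [Nat.add_sub_cancel] at hZ₁card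
    set N : Finset ℝ :=
      Finset.image t (Finset.univ.filter fun i : Fin m => 0 < (i : ℕ) ∧ (i : ℕ) < m - 1) with hN
    have hNcard : N.card = m - 2 := by
      rw [hN, Finset.card_image_of_injective _ ht.injective]
      have h3 := Finset.card_filter_add_card_filter_not
        (s := (Finset.univ : Finset (Fin m)))
        (p := fun i : Fin m => 0 < (i : ℕ) ∧ (i : ℕ) < m - 1)
      have h4 : (Finset.univ.filter fun i : Fin m => ¬(0 < (i : ℕ) ∧ (i : ℕ) < m - 1)) =
          (Finset.univ.filter (fun i : Fin m => (i : ℕ) = 0 ∨ (i : ℕ) = m - 1)) := by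
        apply Finset.filter_congr
        intro i _
        have := i.isLt
        constructor
        · intro h; omega
        · intro h; omega
      rw [h4, filterB_card (m := m) hm] at h3
      simp only [Finset.card_univ, Fintype.card_fin] at h3
      omega
    have hNsubZ : N ⊆ Z := by
      intro x hx
      rw [hN] at hx
      obtain ⟨i, _, rfl⟩ := Finset.mem_image.mp hx
      exact Finset.mem_insert_of_mem (Finset.mem_image.mpr ⟨i, Finset.mem_univ i, rfl⟩)
    set Y : Finset ℝ := Z₁ ∪ N with hY
    have hdisj : Disjoint Z₁ N := by
      rw [Finset.disjoint_left]
      intro x hx hxN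
      exact hZ₁not x hx (hNsubZ hxN)
    have hYcard : Y.card = 2 * m - 2 := by
      rw [hY, Finset.card_union_of_disjoint hdisj, hZ₁card, hNcard]; omega
    have hYsub : (↑Y : Set ℝ) ⊆ Set.Ioo (-1 : ℝ) 1 := by
      intro x hx
      rw [hY, Finset.coe_union, Set.mem_union] at hx
      rcases hx with hx | hx
      · obtain ⟨u, hu, v, hv, h1, h2⟩ := hZ₁btw x hx
        exact ⟨lt_of_le_of_lt (hZsub hu).1 h1, lt_of_lt_of_le h2 (hZsub hv).2⟩
      · rw [hN] at hx
        simp only [Finset.coe_image, Set.mem_image, Finset.mem_coe, Finset.mem_filter] at hx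
        obtain ⟨i, ⟨_, h1, h2⟩, rfl⟩ := hx
        exact hint i h1 h2
    -- derivative of F on Ioo
    have hFd : ∀ x ∈ Set.Ioo (-1 : ℝ) 1,
        HasDerivAt F ((-Real.log ((1 + x) / 2) - 1) / 2 - (derivative P).eval x) x := by
      intro x hx
      exact (hasDerivAt_h (by linarith [hx.1])).sub (P.hasDerivAt x)
    have hG0 : ∀ x ∈ Y, deriv F x = 0 := by
      intro x hx
      rw [hY, Finset.mem_union] at hx
      rcases hx with hx | hx
      · exact hZ₁d x hx
      · rw [hN] at hx
        obtain ⟨i, hi, rfl⟩ := Finset.mem_image.mp hx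
        obtain ⟨-, h1, h2⟩ := Finset.mem_filter.mp hi
        have hti : t i ∈ Set.Ioo (-1 : ℝ) 1 := hint i h1 h2
        rw [(hFd _ hti).deriv]
        have hdh : deriv (fun s : ℝ => Real.negMulLog ((1 + s) / 2)) (t i) =
            (-Real.log ((1 + t i) / 2) - 1) / 2 := (hasDerivAt_h (by linarith [hti.1])).deriv
        have hPder : (derivative P).eval (t i) = (derivative p).eval (t i) := by
          rw [hP, derivative_add, derivative_C_mul, eval_add, eval_mul, eval_C]
          have := wpoly_deriv_node t i h1 h2
          rw [← hw] at this
          rw [this]; ring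
        rw [hPder, hder i h1 h2, hdh]; ring
    have hYne : Y.Nonempty := Finset.card_pos.mp (by omega)
    have hYmin : Y.min' hYne ∈ Y := Y.min'_mem hYne
    have hYmax : Y.max' hYne ∈ Y := Y.max'_mem hYne
    have hIccsub : Set.Icc (Y.min' hYne) (Y.max' hYne) ⊆ Set.Ioo (-1 : ℝ) 1 := by
      intro x hx
      exact ⟨lt_of_lt_of_le (hYsub hYmin).1 hx.1, lt_of_le_of_lt hx.2 (hYsub hYmax).2⟩
    have hGc : ContinuousOn (deriv F) (Set.Icc (Y.min' hYne) (Y.max' hYne)) := by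
      apply ContinuousOn.congr (f := fun x => (-Real.log ((1 + x) / 2) - 1) / 2 - (derivative P).eval x)
      · intro x hx
        have hx' := hIccsub hx
        exact (((hasDerivAt_dh (by linarith [hx'.1])).sub
          ((derivative P).hasDerivAt x)).differentiableAt.continuousAt).continuousWithinAt
      · intro x hx
        exact (hFd x (hIccsub hx)).deriv
    obtain ⟨Y₁, hY₁card, hY₁d, hY₁not, hY₁btw⟩ := rolle_finset (deriv F) hGc Y
      (fun x hx => ⟨Y.min'_le _ (by exact_mod_cast hx), Y.le_max' _ (by exact_mod_cast hx)⟩) hG0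
    rw [hYcard] at hY₁card
    have hY₁sub : (↑Y₁ : Set ℝ) ⊆ Set.Ioo (-1 : ℝ) 1 := by
      intro x hx
      obtain ⟨u, hu, v, hv, h1, h2⟩ := hY₁btw x hx
      exact ⟨lt_trans (hYsub hu).1 h1, lt_trans h2 (hYsub hv).2⟩
    -- the polynomial Q
    set Q : ℝ[X] := -C (1/2 : ℝ) - (X + 1) * derivative (derivative P) with hQdef
    have hQroot : ∀ c ∈ Y₁, Q.eval c = 0 := by
      intro c hc
      have hc' : c ∈ Set.Ioo (-1 : ℝ) 1 := hY₁sub hc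
      have h1c : (0:ℝ) < 1 + c := by linarith [hc'.1]
      have heq : deriv (deriv F) c = -(1 / (2 * (1 + c))) - (derivative (derivative P)).eval c := by
        have hev : deriv F =ᶠ[nhds c]
            (fun x => (-Real.log ((1 + x) / 2) - 1) / 2 - (derivative P).eval x) := by
          filter_upwards [isOpen_Ioo.mem_nhds hc'] with x hx
          exact (hFd x hx).deriv
        rw [hev.deriv_eq]
        exact ((hasDerivAt_dh h1c).sub ((derivative P).hasDerivAt c)).deriv
      have h0 := hY₁d c hc
      rw [h0] at heq
      have h2 : (derivative (derivative P)).eval c = -(1 / (2 * (1 + c))) := by linarith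
      rw [hQdef]
      simp only [eval_sub, eval_neg, eval_C, eval_mul, eval_add, eval_X, eval_one, h2]
      field_simp
      ring
    -- degree bounds
    have hPdeg : P.natDegree ≤ 2 * m - 2 := by
      rw [hP]
      refine le_trans (natDegree_add_le _ _) (max_le (le_trans hdeg (by omega)) ?_)
      refine le_trans (natDegree_C_mul_le _ _) ?_
      rw [hw, wpoly_natDegree t hm]
    have hP2deg : (derivative (derivative P)).natDegree ≤ 2 * m - 4 := by
      have h1 := natDegree_derivative_le P
      have h2 := natDegree_derivative_le (derivative P)
      omega
    have hQdeg : Q.natDegree ≤ 2 * m - 3 := by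
      rw [hQdef]
      refine le_trans (natDegree_sub_le _ _) ?_
      have h1 : ((X + 1 : ℝ[X]) * derivative (derivative P)).natDegree ≤ 2 * m - 3 := by
        refine le_trans natDegree_mul_le ?_
        have h2 : (X + 1 : ℝ[X]).natDegree ≤ 1 := le_trans (natDegree_add_le _ _) (by simp)
        omega
      have h0 : (-C (1/2 : ℝ)).natDegree = 0 := by simp
      omega
    have hQeval : Q.eval (-1) = -(1/2 : ℝ) := by
      rw [hQdef]; simp
    have hQne : Q ≠ 0 := by
      intro h
      rw [h, eval_zero] at hQeval
      norm_num at hQeval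
    have hY₁roots : Y₁.val ≤ Q.roots := by
      rw [Multiset.le_iff_subset Y₁.nodup]
      intro r hr
      exact mem_roots'.mpr ⟨hQne, hQroot r hr⟩
    have hcardval : Multiset.card Y₁.val = 2 * m - 3 := by
      rw [← Finset.card_def]  -- maybe rfl
      omega
    have hcard2 : Multiset.card Q.roots ≤ Q.natDegree := Q.card_roots'
    have hcard1 : 2 * m - 3 ≤ Multiset.card Q.roots := by
      have := Multiset.card_le_card hY₁roots
      omega
    have hQdeg' : Q.natDegree = 2 * m - 3 := le_antisymm hQdeg (by omega)
    have hcardeq : Multiset.card Q.roots = Q.natDegree := by omega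
    have hsplits := (Polynomial.splits_iff_card_roots).mpr hcardeq
    have hrootsY : Y₁.val = Q.roots := Multiset.eq_of_le_of_card_le hY₁roots (by omega)
    have hfact := hsplits.eq_prod_roots
    rw [hfact] at hQeval
    rw [eval_mul, eval_C, eval_multiset_prod, Multiset.map_map, ← hrootsY] at hQeval
    have hmapeq : Y₁.val.map (eval (-1) ∘ fun a : ℝ => X - C a) =
        (Y₁.val.map (fun a : ℝ => 1 + a)).map (fun x : ℝ => -x) := by
      rw [Multiset.map_map]
      apply Multiset.map_congr rfl
      intro x _
      simp [Function.comp]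
      ring
    rw [hmapeq, Multiset.prod_map_neg, Multiset.card_map, hcardval] at hQeval
    have hodd : Odd (2 * m - 3) := ⟨m - 2, by omega⟩
    rw [hodd.neg_one_pow] at hQeval
    have hPpospos : 0 < (Y₁.val.map (fun a : ℝ => 1 + a)).prod := by
      apply Multiset.prod_pos
      intro x hx
      obtain ⟨r, hr, rfl⟩ := Multiset.mem_map.mp hx
      have hrY : r ∈ Y₁ := hr
      linarith [(hY₁sub hrY).1]
    have hleadpos : 0 < Q.leadingCoeff := by
      nlinarith [hQeval, hPpospos]
    -- compute the leading coefficient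
    have hpcoeff : (derivative (derivative p)).coeff (2 * m - 4) = 0 := by
      rw [coeff_derivative, show (2 * m - 4) + 1 = 2 * m - 3 by omega, coeff_derivative,
        show (2 * m - 3) + 1 = 2 * m - 2 by omega,
        coeff_eq_zero_of_natDegree_lt (by omega : p.natDegree < 2 * m - 2)]
      ring
    have hwcoeff : w.coeff (2 * m - 2) = 1 := by
      have := (wpoly_monic t).coeff_natDegree
      rw [wpoly_natDegree t hm] at this
      rw [hw]; exact this
    have hwcoeff2 : (derivative (derivative w)).coeff (2 * m - 4) =
        ((2 * m - 2 : ℕ) : ℝ) * ((2 * m - 3 : ℕ) : ℝ) := by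
      rw [coeff_derivative, show (2 * m - 4) + 1 = 2 * m - 3 by omega, coeff_derivative,
        show (2 * m - 3) + 1 = 2 * m - 2 by omega, hwcoeff]
      push_cast [show (2 * m - 3 : ℕ) = 2 * m - 4 + 1 by omega,
        show (2 * m - 2 : ℕ) = 2 * m - 3 + 1 by omega]
      ring
    have hRcoeff : (derivative (derivative P)).coeff (2 * m - 4) =
        lam * (((2 * m - 2 : ℕ) : ℝ) * ((2 * m - 3 : ℕ) : ℝ)) := by
      rw [hP, derivative_add, derivative_C_mul, derivative_add, derivative_C_mul,
        coeff_add, coeff_C_mul, hpcoeff, hwcoeff2]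
      ring
    have hQcoeff : Q.coeff (2 * m - 3) =
        -(lam * (((2 * m - 2 : ℕ) : ℝ) * ((2 * m - 3 : ℕ) : ℝ))) := by
      have hXR : (X + 1 : ℝ[X]) * derivative (derivative P) =
          X * derivative (derivative P) + derivative (derivative P) := by ring
      rw [hQdef, hXR, coeff_sub, coeff_add, coeff_neg, coeff_C,
        if_neg (by omega : ¬(2 * m - 3 = 0)),
        show 2 * m - 3 = (2 * m - 4) + 1 by omega, coeff_X_mul, hRcoeff,
        coeff_eq_zero_of_natDegree_lt
          (by omega : (derivative (derivative P)).natDegree < 2 * m - 4 + 1)]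
      ring_nf
      rw [show 1 + (m * 2 - 4) = m * 2 - 3 by omega]
    have hlead : Q.leadingCoeff = Q.coeff (2 * m - 3) := by
      rw [Polynomial.leadingCoeff, hQdeg']
    rw [hlead, hQcoeff] at hleadpos
    have hc1 : (0:ℝ) ≤ ((2 * m - 2 : ℕ) : ℝ) := Nat.cast_nonneg _
    have hc2 : (0:ℝ) ≤ ((2 * m - 3 : ℕ) : ℝ) := Nat.cast_nonneg _
    have hprod : (0:ℝ) ≤ lam * (((2 * m - 2 : ℕ) : ℝ) * ((2 * m - 3 : ℕ) : ℝ)) :=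
      mul_nonneg hcon (mul_nonneg hc1 hc2)
    linarith

  intro s hs
  by_cases hnode : ∃ i, s = t i
  · obtain ⟨i, rfl⟩ := hnode
    exact ⟨le_of_eq (hval i), ⟨fun _ => ⟨i, rfl⟩, fun _ => hval i⟩⟩
  · push_neg at hnode
    have hlt := key s hs hnode
    refine ⟨hlt.le, ?_, ?_⟩
    · intro he; exact absurd he (ne_of_lt hlt)
    · intro ⟨i, hi⟩; exact absurd hi (hnode i)
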